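/- Let X be a compact metric space, d ≥ 1, and let f : ℝᵈ → [0, +∞] be convex and lower semicontinuous. Let (Vₕ) and V be finite Borel measures on X, let Aₕ : X → ℝᵈ be Vₕ-integrable and A : X → ℝᵈ be V-integrable. Assume that Vₕ converges to V weakly, i.e. ∫_X φ dVₕ → ∫_X φ dV for every continuous φ : X → ℝ, and that the vector measures Aₕ·Vₕ converge weakly to A·V, i.e. ∫_X φ · Aₕ dVₕ → ∫_X φ · A dV (in ℝᵈ) for every continuous φ : X → ℝ. Then ∫_X f(A(x)) dV(x) ≤ liminf_{h→∞} ∫_X f(Aₕ(x)) dVₕ(x). -/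

import Mathlib

open MeasureTheory Filter Topology ENNReal Matrix Metric Set

lemma clm_eq_dot {d : ℕ} (g : (Fin d → ℝ) →L[ℝ] ℝ) (x : Fin d → ℝ) :
    g x = (fun j => g (Pi.single j 1)) ⬝ᵥ x := by
  have hs : ∀ i : Fin d, Pi.single i (x i) = x i • (Pi.single i (1:ℝ) : Fin d → ℝ) := by
    intro i; ext j; by_cases h : j = i <;> simp [Pi.single_apply, h]
  conv_lhs => rw [← Finset.univ_sum_single x]
  rw [map_sum]
  simp only [hs, _root_.map_smul, smul_eq_mul, dotProduct]
  exact Finset.sum_congr rfl fun i _ => mul_comm _ _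

lemma exists_affine_minorant {d : ℕ} (f : (Fin d → ℝ) → ℝ≥0∞)
    (hconv : ∀ (x y : Fin d → ℝ) (t : ℝ), 0 ≤ t → t ≤ 1 →
      f (t • x + (1 - t) • y) ≤ ENNReal.ofReal t * f x + ENNReal.ofReal (1 - t) * f y)
    (hlsc : LowerSemicontinuous f) (a : Fin d → ℝ) (c : ℝ≥0∞) (hc : c < f a) :
    ∃ p : (Fin d → ℝ) × ℝ, (∀ x, ENNReal.ofReal (p.1 ⬝ᵥ x + p.2) ≤ f x) ∧
      c < ENNReal.ofReal (p.1 ⬝ᵥ a + p.2) := by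
  classical
  set E : Set ((Fin d → ℝ) × ℝ) := {q | 0 ≤ q.2 ∧ f q.1 ≤ ENNReal.ofReal q.2} with hEdef
  have hc_ne : c ≠ ⊤ := hc.ne_top
  -- E is convex
  have hEconv : Convex ℝ E := by
    intro q hq r hr s t hs ht hst
    refine ⟨add_nonneg (mul_nonneg hs hq.1) (mul_nonneg ht hr.1), ?_⟩
    have h1 : f (s • q.1 + (1 - s) • r.1) ≤
        ENNReal.ofReal s * f q.1 + ENNReal.ofReal (1 - s) * f r.1 :=
      hconv q.1 r.1 s hs (by linarith)
    have h2 : ENNReal.ofReal s * f q.1 + ENNReal.ofReal (1 - s) * f r.1 ≤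
        ENNReal.ofReal (s * q.2) + ENNReal.ofReal (t * r.2) := by
      rw [ENNReal.ofReal_mul hs, ENNReal.ofReal_mul (by linarith : (0:ℝ) ≤ t)]
      have : (1 : ℝ) - s = t := by linarith
      rw [this]
      exact add_le_add (mul_le_mul_right hq.2 _) (mul_le_mul_right hr.2 _)
    have h3 : ENNReal.ofReal (s * q.2) + ENNReal.ofReal (t * r.2)
        = ENNReal.ofReal (s * q.2 + t * r.2) :=
      (ENNReal.ofReal_add (mul_nonneg hs hq.1) (mul_nonneg ht hr.1)).symm
    have hfst : (s • q + t • r).1 = s • q.1 + (1 - s) • r.1 := by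
      have : (1 : ℝ) - s = t := by linarith
      simp [this]
    have hsnd : (s • q + t • r).2 = s * q.2 + t * r.2 := rfl
    refine hsnd ▸ ?_
    calc f ((s • q + t • r).1) = f (s • q.1 + (1 - s) • r.1) := by rw [hfst]
      _ ≤ _ := h1.trans (h2.trans_eq h3)
  -- E is closed
  have hEclosed : IsClosed E := by
    have h1 : IsClosed {q : (Fin d → ℝ) × ℝ | 0 ≤ q.2} :=
      isClosed_le continuous_const continuous_snd
    have h2 : IsOpen {q : (Fin d → ℝ) × ℝ | ENNReal.ofReal q.2 < f q.1} := by
      rw [isOpen_iff_mem_nhds]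
      rintro ⟨x₀, t₀⟩ hq₀
      simp only [mem_setOf_eq] at hq₀
      obtain ⟨u, hu1, hu2⟩ := exists_between hq₀
      set c' : ℝ≥0∞ := min u (ENNReal.ofReal t₀ + 1) with hc'
      have hc'1 : ENNReal.ofReal t₀ < c' :=
        lt_min hu1 (ENNReal.lt_add_right ENNReal.ofReal_ne_top one_ne_zero)
      have hc'2 : c' < f x₀ := (min_le_left _ _).trans_lt hu2
      have hc'top : c' ≠ ⊤ := by
        refine ((min_le_right _ _).trans_lt ?_).ne
        exact ENNReal.add_lt_top.mpr ⟨ENNReal.ofReal_lt_top, ENNReal.one_lt_top⟩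
      set s : ℝ := c'.toReal with hsdef
      have hts : t₀ < s := by
        by_contra h
        push_neg at h
        have : c' ≤ ENNReal.ofReal t₀ := by
          rw [← ENNReal.ofReal_toReal hc'top]
          exact ENNReal.ofReal_le_ofReal h
        exact absurd hc'1 this.not_gt
      have hU : IsOpen {x : Fin d → ℝ | c' < f x} := hlsc.isOpen_preimage c'
      have hmem : {x : Fin d → ℝ | c' < f x} ×ˢ Iio s ∈ 𝓝 (x₀, t₀) :=
        prod_mem_nhds (hU.mem_nhds hc'2) (Iio_mem_nhds hts)
      refine Filter.mem_of_superset hmem ?_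
      rintro ⟨x, t⟩ ⟨hx, ht⟩
      simp only [mem_setOf_eq] at hx ht ⊢
      calc ENNReal.ofReal t ≤ ENNReal.ofReal s := ENNReal.ofReal_le_ofReal ht.le
        _ = c' := ENNReal.ofReal_toReal hc'top
        _ < f x := hx
    have hEeq : E = {q : (Fin d → ℝ) × ℝ | 0 ≤ q.2} ∩ {q | ENNReal.ofReal q.2 < f q.1}ᶜ := by
      ext q; simp [hEdef, not_lt]
    rw [hEeq]
    exact h1.inter h2.isClosed_compl
  -- the point to separate
  obtain ⟨ρ, hρ0, hρ1, hρ2⟩ : ∃ ρ : ℝ, 0 ≤ ρ ∧ c < ENNReal.ofReal ρ ∧ ENNReal.ofReal ρ < f a := by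
    by_cases hfa : f a = ⊤
    · refine ⟨c.toReal + 1, by positivity, ?_, ?_⟩
      · rw [ENNReal.lt_ofReal_iff_toReal_lt hc_ne]; linarith
      · rw [hfa]; exact ENNReal.ofReal_lt_top
    · obtain ⟨u, hu1, hu2⟩ := exists_between hc
      have hu_ne : u ≠ ⊤ := ne_top_of_lt hu2
      exact ⟨u.toReal, ENNReal.toReal_nonneg,
        by rwa [ENNReal.ofReal_toReal hu_ne], by rwa [ENNReal.ofReal_toReal hu_ne]⟩
  have haρE : ((a, ρ) : (Fin d → ℝ) × ℝ) ∉ E := fun h => absurd hρ2 h.2.not_gt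
  by_cases hEne : E.Nonempty
  swap
  · -- E empty: f ≡ ⊤
    have hall : ∀ x, f x = ⊤ := by
      intro x
      by_contra hx
      exact hEne ⟨(x, (f x).toReal), ENNReal.toReal_nonneg,
        by rw [ENNReal.ofReal_toReal hx]⟩
    refine ⟨(0, ρ), fun x => by simp [hall x], ?_⟩
    simpa using hρ1
  -- separation
  obtain ⟨L, u, hLa, hLE⟩ := geometric_hahn_banach_point_closed hEconv hEclosed haρE
  have hdecgen : ∀ (M : ((Fin d → ℝ) × ℝ) →L[ℝ] ℝ) (x : Fin d → ℝ) (t : ℝ),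
      M (x, t) = M (x, 0) + t * M (0, 1) := by
    intro M x t
    have h : ((x, t) : (Fin d → ℝ) × ℝ) = (x, 0) + t • ((0 : Fin d → ℝ), (1:ℝ)) := by
      simp [Prod.ext_iff]
    rw [h, map_add, M.map_smul, smul_eq_mul]
  have hnonneg : ∀ (M : ((Fin d → ℝ) × ℝ) →L[ℝ] ℝ) (w : ℝ),
      (∀ q ∈ E, w < M q) → 0 ≤ M (0, 1) := by
    intro M w hME
    by_contra h
    push_neg at h
    obtain ⟨⟨x, t⟩, hxt⟩ := hEne
    obtain ⟨n, hn⟩ := exists_nat_gt ((M (x, 0) + t * M (0,1) - w) / (-M (0,1)))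
    have hmem : ((x, t + n) : (Fin d → ℝ) × ℝ) ∈ E := by
      refine ⟨add_nonneg hxt.1 (Nat.cast_nonneg n), hxt.2.trans ?_⟩
      exact ENNReal.ofReal_le_ofReal (le_add_of_nonneg_right (Nat.cast_nonneg n))
    have h1 := hME _ hmem
    rw [hdecgen] at h1
    rw [div_lt_iff₀ (by linarith)] at hn
    nlinarith
  -- minorant builder when vertical component is positive
  have mk : ∀ (M : ((Fin d → ℝ) × ℝ) →L[ℝ] ℝ) (w : ℝ), (∀ q ∈ E, w < M q) → 0 < M (0,1) →
      ∃ p : (Fin d → ℝ) × ℝ, (∀ x, f x ≠ ⊤ → p.1 ⬝ᵥ x + p.2 < (f x).toReal) ∧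
        (∀ x, p.1 ⬝ᵥ x + p.2 = (w - M (x, 0)) / M (0,1)) := by
    intro M w hME hMβ
    set M₁ : (Fin d → ℝ) →L[ℝ] ℝ := M.comp (ContinuousLinearMap.inl ℝ _ _) with hM₁def
    have hM₁ : ∀ x, M₁ x = M (x, 0) := fun x => by
      simp [hM₁def]
    set γ : ℝ := M (0, 1) with hγ
    have hval : ∀ x : Fin d → ℝ,
        ((-(1/γ)) • (fun j => M₁ (Pi.single j 1))) ⬝ᵥ x + w / γ = (w - M (x, 0)) / γ := by
      intro x
      rw [smul_dotProduct, ← clm_eq_dot M₁ x, hM₁, smul_eq_mul]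
      field_simp
      ring
    refine ⟨((-(1/γ)) • (fun j => M₁ (Pi.single j 1)), w / γ), ?_, hval⟩
    intro x hx
    have hmem : ((x, (f x).toReal) : (Fin d → ℝ) × ℝ) ∈ E :=
      ⟨ENNReal.toReal_nonneg, by rw [ENNReal.ofReal_toReal hx]⟩
    have h1 := hME _ hmem
    rw [hdecgen] at h1
    rw [hval x, div_lt_iff₀ hMβ]
    linarith
  have hβ0 := hnonneg L u hLE
  rcases lt_or_eq_of_le hβ0 with hβpos | hβzero
  · -- vertical component positive
    obtain ⟨p, hp1, hp2⟩ := mk L u hLE hβpos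
    refine ⟨p, ?_, ?_⟩
    · intro x
      by_cases hx : f x = ⊤
      · simp [hx]
      · exact le_trans (ENNReal.ofReal_le_ofReal (hp1 x hx).le)
          (le_of_eq (ENNReal.ofReal_toReal hx))
    · have hρlt : ρ < p.1 ⬝ᵥ a + p.2 := by
        rw [hp2 a, lt_div_iff₀ hβpos]
        rw [hdecgen L a ρ] at hLa
        linarith
      exact hρ1.trans_le (ENNReal.ofReal_le_ofReal hρlt.le)
  · -- vertical component zero: vertical separator
    obtain ⟨⟨x₁, t₁⟩, hq₁⟩ := hEne
    have hnot : ((x₁, -1) : (Fin d → ℝ) × ℝ) ∉ E := fun h => by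
      have := h.1; norm_num at this
    obtain ⟨L', u', hL'a, hL'E⟩ := geometric_hahn_banach_point_closed hEconv hEclosed hnot
    have hβ'0 := hnonneg L' u' hL'E
    have hβ'pos : 0 < L' (0, 1) := by
      rcases lt_or_eq_of_le hβ'0 with h | h
      · exact h
      · exfalso
        have h1 := hL'E _ hq₁
        rw [hdecgen L' x₁ t₁, ← h] at h1
        rw [hdecgen L' x₁ (-1), ← h] at hL'a
        simp at h1 hL'a
        linarith
    obtain ⟨p', hp'1, hp'2⟩ := mk L' u' hL'E hβ'pos
    -- vertical separator: for q=(x,t)∈E, u < L(x,0); and L(a,0) < u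
    have hvert : ∀ x : Fin d → ℝ, f x ≠ ⊤ → u < L (x, 0) := by
      intro x hx
      have hmem : ((x, (f x).toReal) : (Fin d → ℝ) × ℝ) ∈ E :=
        ⟨ENNReal.toReal_nonneg, by rw [ENNReal.ofReal_toReal hx]⟩
      have h1 := hLE _ hmem
      rw [hdecgen, ← hβzero] at h1
      linarith
    have hverta : L (a, 0) < u := by
      rw [hdecgen L a ρ, ← hβzero] at hLa
      linarith
    set L₁ : (Fin d → ℝ) →L[ℝ] ℝ := L.comp (ContinuousLinearMap.inl ℝ _ _) with hL₁def
    have hL₁ : ∀ x, L₁ x = L (x, 0) := fun x => by simp [hL₁def]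
    set ba : ℝ := p'.1 ⬝ᵥ a + p'.2 with hba
    set n : ℝ := max 0 ((c.toReal + 1 - ba) / (u - L (a, 0))) with hn
    have hn0 : 0 ≤ n := le_max_left _ _
    refine ⟨(p'.1 + n • (fun j => -(L₁ (Pi.single j 1))), p'.2 + n * u), ?_, ?_⟩
    all_goals
      have hvalgen : ∀ x : Fin d → ℝ,
          (p'.1 + n • (fun j => -(L₁ (Pi.single j 1)))) ⬝ᵥ x + (p'.2 + n * u)
            = (p'.1 ⬝ᵥ x + p'.2) + n * (u - L (x, 0)) := by
        intro x
        rw [add_dotProduct, smul_dotProduct]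
        have : (fun j => -(L₁ (Pi.single j 1))) ⬝ᵥ x = -(L₁ x) := by
          have h0 : (fun j => -(L₁ (Pi.single j 1))) = -(fun j => L₁ (Pi.single j 1)) := by
            ext j; simp
          rw [h0, neg_dotProduct, ← clm_eq_dot L₁ x]
        rw [this, hL₁, smul_eq_mul]
        ring
    · intro x
      by_cases hx : f x = ⊤
      · simp [hx]
      · have h1 : (p'.1 ⬝ᵥ x + p'.2) + n * (u - L (x, 0)) < (f x).toReal := by
          have := hp'1 x hx
          have h2 := hvert x hx
          nlinarith
        rw [hvalgen x]
        exact le_trans (ENNReal.ofReal_le_ofReal h1.le)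
          (le_of_eq (ENNReal.ofReal_toReal hx))
    · rw [hvalgen a]
      rw [ENNReal.lt_ofReal_iff_toReal_lt hc_ne]
      have hpos : 0 < u - L (a, 0) := by linarith
      have hge : (c.toReal + 1 - ba) / (u - L (a, 0)) ≤ n := le_max_right _ _
      rw [div_le_iff₀ hpos] at hge
      simp only [← hba]
      nlinarith

lemma exists_minorant_seq {d : ℕ} (f : (Fin d → ℝ) → ℝ≥0∞)
    (hconv : ∀ (x y : Fin d → ℝ) (t : ℝ), 0 ≤ t → t ≤ 1 →
      f (t • x + (1 - t) • y) ≤ ENNReal.ofReal t * f x + ENNReal.ofReal (1 - t) * f y)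
    (hlsc : LowerSemicontinuous f) :
    ∃ e : ℕ → (Fin d → ℝ) × ℝ,
      (∀ n x, ENNReal.ofReal ((e n).1 ⬝ᵥ x + (e n).2) ≤ f x) ∧
      (∀ a, f a = ⨆ n, ENNReal.ofReal ((e n).1 ⬝ᵥ a + (e n).2)) := by
  classical
  set S : Set ((Fin d → ℝ) × ℝ) := {p | ∀ x, ENNReal.ofReal (p.1 ⬝ᵥ x + p.2) ≤ f x} with hS
  have hSne : S.Nonempty := ⟨(0, 0), fun x => by simp⟩
  haveI : Nonempty ↥S := hSne.to_subtype
  let e' : ℕ → ↥S := TopologicalSpace.denseSeq ↥S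
  have hdense : DenseRange e' := TopologicalSpace.denseRange_denseSeq ↥S
  refine ⟨fun n => (e' n : (Fin d → ℝ) × ℝ), fun n x => (e' n).2 x, fun a => le_antisymm ?_
    (iSup_le fun n => (e' n).2 a)⟩
  refine le_of_forall_lt fun c hc => ?_
  obtain ⟨p, hp1, hp2⟩ := exists_affine_minorant f hconv hlsc a c hc
  have hv : Continuous fun q : ↥S => ENNReal.ofReal ((q : (Fin d → ℝ) × ℝ).1 ⬝ᵥ a + (q : (Fin d → ℝ) × ℝ).2) := by
    refine ENNReal.continuous_ofReal.comp ?_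
    refine Continuous.add ?_ (continuous_snd.comp continuous_subtype_val)
    refine continuous_finset_sum _ fun j _ => ?_
    exact (((continuous_apply j).comp (continuous_fst.comp continuous_subtype_val)).mul continuous_const)
  have hopen : IsOpen {q : ↥S | c < ENNReal.ofReal ((q : (Fin d → ℝ) × ℝ).1 ⬝ᵥ a + (q : (Fin d → ℝ) × ℝ).2)} :=
    isOpen_lt continuous_const hv
  have hne : {q : ↥S | c < ENNReal.ofReal ((q : (Fin d → ℝ) × ℝ).1 ⬝ᵥ a + (q : (Fin d → ℝ) × ℝ).2)}.Nonempty :=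
    ⟨⟨p, hp1⟩, hp2⟩
  obtain ⟨n, hn⟩ := hdense.exists_mem_open hopen hne
  exact hn.trans_le (le_iSup (fun n => ENNReal.ofReal ((e' n : (Fin d → ℝ) × ℝ).1 ⬝ᵥ a + (e' n : (Fin d → ℝ) × ℝ).2)) n)

noncomputable def dotCLM {d : ℕ} (b : Fin d → ℝ) : (Fin d → ℝ) →L[ℝ] ℝ :=
  ∑ j, b j • ContinuousLinearMap.proj j

lemma dotCLM_apply {d : ℕ} (b v : Fin d → ℝ) : dotCLM b v = b ⬝ᵥ v := by
  simp [dotCLM, dotProduct, ContinuousLinearMap.sum_apply, mul_comm]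

lemma lin_integrable {X : Type*} [MeasurableSpace X] {μ : Measure X} [IsFiniteMeasure μ]
    {d : ℕ} {B : X → Fin d → ℝ} (hB : Integrable B μ) (p : (Fin d → ℝ) × ℝ) :
    Integrable (fun x => p.1 ⬝ᵥ B x + p.2) μ := by
  have h1 : Integrable (fun x => (dotCLM p.1) (B x)) μ := (dotCLM p.1).integrable_comp hB
  have h2 := h1.add (integrable_const (μ := μ) p.2)
  simpa [dotCLM_apply] using h2

lemma abs_dot_le {d : ℕ} (b v : Fin d → ℝ) : |b ⬝ᵥ v| ≤ (∑ j, |b j|) * ‖v‖ := by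
  calc |b ⬝ᵥ v| ≤ ∑ j, |b j * v j| := Finset.abs_sum_le_sum_abs _ _
    _ ≤ ∑ j, |b j| * ‖v‖ := by
        refine Finset.sum_le_sum fun j _ => ?_
        rw [abs_mul]
        refine mul_le_mul_of_nonneg_left ?_ (abs_nonneg _)
        simpa [Real.norm_eq_abs] using norm_le_pi_norm v j
    _ = (∑ j, |b j|) * ‖v‖ := (Finset.sum_mul _ _ _).symm

lemma ofReal_integral_le_lintegral_ofReal' {α : Type*} [MeasurableSpace α] {μ : Measure α}
    {g : α → ℝ} (hg : Integrable g μ) :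
    ENNReal.ofReal (∫ x, g x ∂μ) ≤ ∫⁻ x, ENNReal.ofReal (g x) ∂μ := by
  have hmax : ∀ a : ℝ, ENNReal.ofReal (max a 0) = ENNReal.ofReal a := by
    intro a
    rcases le_total a 0 with h | h
    · simp [max_eq_right h, ENNReal.ofReal_eq_zero.mpr h]
    · simp [max_eq_left h]
  calc ENNReal.ofReal (∫ x, g x ∂μ) ≤ ENNReal.ofReal (∫ x, max (g x) 0 ∂μ) := by
        refine ENNReal.ofReal_le_ofReal ?_
        exact integral_mono hg hg.pos_part (fun x => le_max_left _ _)
    _ = ∫⁻ x, ENNReal.ofReal (max (g x) 0) ∂μ :=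
        ofReal_integral_eq_lintegral_ofReal hg.pos_part (ae_of_all _ fun x => le_max_right _ _)
    _ = ∫⁻ x, ENNReal.ofReal (g x) ∂μ := by simp only [hmax]

set_option maxHeartbeats 1000000 in
lemma finite_family_estimate
    {X : Type*} [MetricSpace X] [CompactSpace X] [MeasurableSpace X] [BorelSpace X]
    {d : ℕ}
    (f : (Fin d → ℝ) → ℝ≥0∞)
    (Vh : ℕ → Measure X) (V : Measure X)
    (hVhfin : ∀ h, IsFiniteMeasure (Vh h)) (hVfin : IsFiniteMeasure V)
    (Ah : ℕ → X → (Fin d → ℝ)) (A : X → (Fin d → ℝ))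
    (hAhint : ∀ h, Integrable (Ah h) (Vh h)) (hAint : Integrable A V)
    (hweak : ∀ φ : X → ℝ, Continuous φ →
      Tendsto (fun h => ∫ x, φ x ∂(Vh h)) atTop (𝓝 (∫ x, φ x ∂V)))
    (hweakvec : ∀ φ : X → ℝ, Continuous φ →
      Tendsto (fun h => ∫ x, φ x • Ah h x ∂(Vh h)) atTop (𝓝 (∫ x, φ x • A x ∂V)))
    (k : ℕ) (χ : Fin (k+1) → (Fin d → ℝ) × ℝ)
    (m : (Fin d → ℝ) → ℝ)
    (hm_cont : Continuous m)
    (hm_nonneg : ∀ a, 0 ≤ m a)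
    (hm_ge : ∀ i a, (χ i).1 ⬝ᵥ a + (χ i).2 ≤ m a)
    (hm_rep : ∀ a, ∃ i, m a = (χ i).1 ⬝ᵥ a + (χ i).2)
    (hm_le : ∀ a, ENNReal.ofReal (m a) ≤ f a) :
    ∫⁻ x, ENNReal.ofReal (m (A x)) ∂V ≤ liminf (fun h => ∫⁻ x, f (Ah h x) ∂(Vh h)) atTop := by
  classical
  haveI := hVfin
  -- measurable representative of A
  set A' : X → Fin d → ℝ := hAint.1.mk A with hA'def
  have hA'sm : StronglyMeasurable A' := hAint.1.stronglyMeasurable_mk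
  have hAA' : A =ᵐ[V] A' := hAint.1.ae_eq_mk
  have hA'meas : Measurable A' := hA'sm.measurable
  have hA'int : Integrable A' V := hAint.congr hAA'
  have hlhs : ∫⁻ x, ENNReal.ofReal (m (A x)) ∂V = ∫⁻ x, ENNReal.ofReal (m (A' x)) ∂V :=
    lintegral_congr_ae (hAA'.mono fun x hx => by dsimp only; rw [hx])
  rw [hlhs]
  -- the affine pieces
  set g : Fin (k+1) → X → ℝ := fun i x => (χ i).1 ⬝ᵥ A' x + (χ i).2 with hgdef
  have hlin_cont : ∀ i, Continuous (fun a : Fin d → ℝ => (χ i).1 ⬝ᵥ a + (χ i).2) := by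
    intro i
    refine Continuous.add ?_ continuous_const
    exact continuous_finset_sum _ fun j _ => (continuous_const.mul (continuous_apply j))
  have hgmeas : ∀ i, Measurable (g i) := fun i => ((hlin_cont i).measurable).comp hA'meas
  have hgint : ∀ i, Integrable (g i) V := fun i => lin_integrable hA'int (χ i)
  have hmA'meas : Measurable (fun x => m (A' x)) := hm_cont.measurable.comp hA'meas
  -- the partition
  set E : Fin (k+1) → Set X :=
    fun i => {x | g i x = m (A' x) ∧ ∀ j, j < i → g j x ≠ m (A' x)} with hEdef
  have hEmeas : ∀ i, MeasurableSet (E i) := by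
    intro i
    have heq : E i = {x | g i x = m (A' x)} ∩
        ⋂ (j : Fin (k+1)) (_ : j < i), {x | g j x = m (A' x)}ᶜ := by
      ext x; simp [hEdef]
    rw [heq]
    refine MeasurableSet.inter (measurableSet_eq_fun (hgmeas i) hmA'meas) ?_
    refine MeasurableSet.iInter fun j => ?_
    refine MeasurableSet.iInter fun hj => ?_
    exact (measurableSet_eq_fun (hgmeas j) hmA'meas).compl
  have hEdisj : Pairwise (Function.onFun Disjoint E) := by
    intro i j hij
    refine Set.disjoint_left.mpr fun x hxi hxj => ?_
    rcases lt_trichotomy i j with h | h | h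
    · exact hxj.2 i h hxi.1
    · exact hij h
    · exact hxi.2 j h hxj.1
  have hEcover : (⋃ i, E i) = univ := by
    refine eq_univ_of_forall fun x => ?_
    obtain ⟨i₀, hi₀⟩ := hm_rep (A' x)
    set F : Finset (Fin (k+1)) := Finset.univ.filter (fun i => g i x = m (A' x)) with hF
    have hFne : F.Nonempty := ⟨i₀, by simp [hF, hgdef, hi₀.symm]⟩
    refine Set.mem_iUnion.mpr ⟨F.min' hFne, ?_, fun j hj hPj => ?_⟩
    · have := F.min'_mem hFne
      simpa [hF] using this
    · have : F.min' hFne ≤ j := F.min'_le j (by simp [hF, hPj])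
      exact absurd hj this.not_gt
  -- decomposition of the left side
  have hsplit : ∀ F : X → ℝ≥0∞, ∫⁻ x, F x ∂V = ∑ i, ∫⁻ x in E i, F x ∂V := by
    intro F
    rw [← tsum_fintype (L := SummationFilter.unconditional _)]
    rw [← lintegral_iUnion hEmeas hEdisj F, hEcover, Measure.restrict_univ]
  have hgnn : ∀ i, ∀ x ∈ E i, 0 ≤ g i x := by
    intro i x hx
    rw [hx.1]
    exact hm_nonneg _
  have hω : ∀ i, ∫⁻ x in E i, ENNReal.ofReal (m (A' x)) ∂V
      = ENNReal.ofReal (∫ x in E i, g i x ∂V) := by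
    intro i
    have h1 : ∫⁻ x in E i, ENNReal.ofReal (m (A' x)) ∂V
        = ∫⁻ x in E i, ENNReal.ofReal (g i x) ∂V :=
      setLIntegral_congr_fun (hEmeas i) (fun x hx => by rw [hx.1])
    rw [h1, ofReal_integral_eq_lintegral_ofReal ((hgint i).restrict)
      (((ae_restrict_iff' (hEmeas i)).mpr (ae_of_all _ (hgnn i))))]
  have hωnn : ∀ i, 0 ≤ ∫ x in E i, g i x ∂V := by
    intro i
    refine integral_nonneg_of_ae ?_
    exact (ae_restrict_iff' (hEmeas i)).mpr (ae_of_all _ (hgnn i))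
  have hlhs2 : ∫⁻ x, ENNReal.ofReal (m (A' x)) ∂V
      = ENNReal.ofReal (∑ i, ∫ x in E i, g i x ∂V) := by
    rw [hsplit, ENNReal.ofReal_sum_of_nonneg (fun i _ => hωnn i)]
    exact Finset.sum_congr rfl fun i _ => hω i
  -- reduce to: LHS ≤ liminf + ε
  refine ENNReal.le_of_forall_pos_le_add fun ε hε _ => ?_
  -- constants
  set C : ℝ := (∑ i, ((∑ j, |(χ i).1 j|) + |(χ i).2|)) + 1 with hC
  have hsum_nn : (0:ℝ) ≤ ∑ i, ((∑ j, |(χ i).1 j|) + |(χ i).2|) :=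
    Finset.sum_nonneg fun i _ => add_nonneg (Finset.sum_nonneg fun j _ => abs_nonneg _) (abs_nonneg _)
  have hCpos : 0 < C := by rw [hC]; linarith
  have hterm_le : ∀ i : Fin (k+1), (∑ j, |(χ i).1 j|) + |(χ i).2| ≤ C := by
    intro i
    rw [hC]
    have h1 : (∑ j, |(χ i).1 j|) + |(χ i).2|
        ≤ ∑ i', ((∑ j, |(χ i').1 j|) + |(χ i').2|) :=
      Finset.single_le_sum
        (f := fun i' : Fin (k+1) => (∑ j, |(χ i').1 j|) + |(χ i').2|)
        (fun i' _ => add_nonneg (Finset.sum_nonneg fun j _ => abs_nonneg _) (abs_nonneg _))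
        (Finset.mem_univ i)
    linarith
  set W : X → ℝ := fun x => 1 + ‖A' x‖ with hWdef
  have hgbound : ∀ i x, |g i x| ≤ C * W x := by
    intro i x
    have h1 : |g i x| ≤ |(χ i).1 ⬝ᵥ A' x| + |(χ i).2| := abs_add_le _ _
    have h2 : |(χ i).1 ⬝ᵥ A' x| ≤ (∑ j, |(χ i).1 j|) * ‖A' x‖ := abs_dot_le _ _
    have h3 := hterm_le i
    have h4 : (∑ j, |(χ i).1 j|) ≤ C := by
      have := abs_nonneg ((χ i).2); linarith
    have h5 : (∑ j, |(χ i).1 j|) * ‖A' x‖ ≤ C * ‖A' x‖ :=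
      mul_le_mul_of_nonneg_right h4 (norm_nonneg _)
    have h6 : |(χ i).2| ≤ C := by
      have := Finset.sum_nonneg (fun j (_ : j ∈ Finset.univ) => abs_nonneg ((χ i).1 j))
      linarith
    have : C * W x = C + C * ‖A' x‖ := by rw [hWdef]; ring
    linarith
  have hWint : Integrable W V := (integrable_const 1).add hA'int.norm
  have hWnn : ∀ x, 0 ≤ W x := fun x => by rw [hWdef]; positivity
  set μ₀ : Measure X := V.withDensity (fun x => ENNReal.ofReal (W x)) with hμ₀
  haveI hμ₀fin : IsFiniteMeasure μ₀ := by
    constructor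
    rw [hμ₀, withDensity_apply _ MeasurableSet.univ, Measure.restrict_univ,
      ← ofReal_integral_eq_lintegral_ofReal hWint (ae_of_all _ hWnn)]
    exact ENNReal.ofReal_lt_top
  have hμ₀key : ∀ s : Set X, MeasurableSet s → ∫ x in s, W x ∂V = (μ₀ s).toReal := by
    intro s hs
    rw [hμ₀, withDensity_apply _ hs,
      ← ofReal_integral_eq_lintegral_ofReal (hWint.restrict)
        ((ae_restrict_iff' hs).mpr (ae_of_all _ fun x _ => hWnn x)),
      ENNReal.toReal_ofReal (integral_nonneg fun x => hWnn x)]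
  set η : ℝ := (ε : ℝ) / (2 * C * (k+1) + 1) with hη
  have hεpos : (0:ℝ) < ε := hε
  have hden : (0:ℝ) < 2 * C * (k+1) + 1 := by positivity
  have hηpos : 0 < η := div_pos hεpos hden
  have hηD : η * (2 * C * (k+1) + 1) = (ε:ℝ) := by
    rw [hη]; field_simp
  -- inner regularity: compact subsets
  have hKex : ∀ i, ∃ K, K ⊆ E i ∧ IsCompact K ∧ μ₀ (E i \ K) < ENNReal.ofReal η := by
    intro i
    obtain ⟨K, hK1, hK2, hK3⟩ := (hEmeas i).exists_isCompact_diff_lt (measure_ne_top μ₀ _)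
      (ENNReal.ofReal_pos.mpr hηpos).ne'
    exact ⟨K, hK1, hK2, hK3⟩
  choose K hKsub hKcomp hKsmall using hKex
  have hKdisj : ∀ i j, i ≠ j → Disjoint (K i) (K j) :=
    fun i j hij => Set.disjoint_of_subset (hKsub i) (hKsub j) (hEdisj hij)
  -- thickening radius
  have hpair : ∀ p : Fin (k+1) × Fin (k+1), ∃ δ, 0 < δ ∧ (p.1 ≠ p.2 →
      Disjoint (thickening δ (K p.1)) (thickening δ (K p.2))) := by
    intro p
    by_cases hp : p.1 = p.2
    · exact ⟨1, one_pos, fun h => absurd hp h⟩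
    · obtain ⟨δ, hδ1, hδ2⟩ := (hKdisj _ _ hp).exists_thickenings (hKcomp _) (hKcomp _).isClosed
      exact ⟨δ, hδ1, fun _ => hδ2⟩
  choose δp hδp1 hδp2 using hpair
  set δmin : ℝ := Finset.univ.inf' Finset.univ_nonempty δp with hδmin
  have hδminpos : 0 < δmin := by
    rw [hδmin, Finset.lt_inf'_iff]
    exact fun p _ => hδp1 p
  have hth : ∀ i, ∀ᶠ δ in 𝓝 (0:ℝ), μ₀ (cthickening δ (K i)) < μ₀ (K i) + ENNReal.ofReal η := by
    intro i
    have h1 : Tendsto (fun r => μ₀ (cthickening r (K i))) (𝓝 0) (𝓝 (μ₀ (K i))) :=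
      tendsto_measure_cthickening_of_isClosed ⟨1, one_pos, measure_ne_top _ _⟩ (hKcomp i).isClosed
    have h2 : μ₀ (K i) < μ₀ (K i) + ENNReal.ofReal η :=
      ENNReal.lt_add_right (measure_ne_top _ _) (ENNReal.ofReal_pos.mpr hηpos).ne'
    exact h1.eventually_lt_const h2
  have hev : ∀ᶠ δ in 𝓝[>] (0:ℝ), (∀ i, μ₀ (cthickening δ (K i)) < μ₀ (K i) + ENNReal.ofReal η)
      ∧ δ < δmin ∧ 0 < δ := by
    refine Filter.Eventually.and ?_ (Filter.Eventually.and ?_ self_mem_nhdsWithin)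
    · exact nhdsWithin_le_nhds (Filter.eventually_all.mpr hth)
    · exact nhdsWithin_le_nhds (Filter.eventually_of_mem (Iio_mem_nhds hδminpos) fun x hx => hx)
  obtain ⟨δ, hδall, hδlt, hδpos⟩ := hev.exists
  have hδle : ∀ p : Fin (k+1) × Fin (k+1), δ ≤ δp p := by
    intro p
    exact le_of_lt (hδlt.trans_le (by rw [hδmin]; exact Finset.inf'_le _ (Finset.mem_univ p)))
  have hTdiff : ∀ i, μ₀ (thickening δ (K i) \ K i) < ENNReal.ofReal η := by
    intro i
    have h1 : μ₀ (thickening δ (K i)) < μ₀ (K i) + ENNReal.ofReal η :=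
      lt_of_le_of_lt (measure_mono (thickening_subset_cthickening _ _)) (hδall i)
    exact measure_diff_lt_of_lt_add (hKcomp i).isClosed.measurableSet.nullMeasurableSet
      (self_subset_thickening hδpos _) (measure_ne_top _ _) h1
  -- the test functions
  set φ : Fin (k+1) → X → ℝ :=
    fun i x => if (K i).Nonempty then max 0 (1 - infDist x (K i) / δ) else 0 with hφdef
  have hφcont : ∀ i, Continuous (φ i) := by
    intro i
    by_cases h : (K i).Nonempty
    · simp only [hφdef, if_pos h]
      exact continuous_const.max (continuous_const.sub ((continuous_infDist_pt _).div_const δ))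
    · simp only [hφdef, if_neg h]
      exact continuous_const
  have hφ01 : ∀ i x, 0 ≤ φ i x ∧ φ i x ≤ 1 := by
    intro i x
    by_cases h : (K i).Nonempty
    · simp only [hφdef, if_pos h]
      refine ⟨le_max_left _ _, max_le zero_le_one ?_⟩
      have h1 : 0 ≤ infDist x (K i) / δ := div_nonneg infDist_nonneg hδpos.le
      linarith
    · simp only [hφdef, if_neg h]
      norm_num
  have hφK : ∀ i x, x ∈ K i → φ i x = 1 := by
    intro i x hx
    have h : (K i).Nonempty := ⟨x, hx⟩
    simp only [hφdef, if_pos h, infDist_zero_of_mem hx]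
    norm_num
  have hφsupp : ∀ i x, φ i x ≠ 0 → x ∈ thickening δ (K i) := by
    intro i x hx
    by_cases h : (K i).Nonempty
    · simp only [hφdef, if_pos h] at hx
      have h2 : infDist x (K i) / δ < 1 := by
        by_contra hcon
        push_neg at hcon
        exact hx (max_eq_left (by linarith))
      rw [mem_thickening_iff_infDist_lt h]
      rw [div_lt_one hδpos] at h2
      exact h2
    · simp only [hφdef, if_neg h] at hx
      exact absurd rfl hx
  have hφsum : ∀ x, ∑ i, φ i x ≤ 1 := by
    intro x
    by_cases hall : ∀ i, φ i x = 0
    · simp only [hall]; simp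
    · push_neg at hall
      obtain ⟨i₀, hi₀⟩ := hall
      have hz : ∀ j ∈ Finset.univ, j ≠ i₀ → φ j x = 0 := by
        intro j _ hj
        by_contra hjz
        have h1 := hφsupp i₀ x hi₀
        have h2 := hφsupp j x hjz
        have hd := hδp2 (j, i₀) hj
        have hd2 : Disjoint (thickening δ (K j)) (thickening δ (K i₀)) :=
          hd.mono (thickening_mono (hδle (j, i₀)) _) (thickening_mono (hδle (j, i₀)) _)
        exact Set.disjoint_left.mp hd2 h2 h1
      rw [Finset.sum_eq_single_of_mem i₀ (Finset.mem_univ _) hz]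
      exact (hφ01 i₀ x).2
  -- pointwise comparison with the indicator of E i
  have hφdiff : ∀ i x, |φ i x - (E i).indicator (fun _ => (1:ℝ)) x| ≤
      (E i \ K i).indicator (fun _ => (1:ℝ)) x
        + (thickening δ (K i) \ K i).indicator (fun _ => (1:ℝ)) x := by
    intro i x
    have hind1 : 0 ≤ (E i \ K i).indicator (fun _ => (1:ℝ)) x :=
      Set.indicator_nonneg (fun _ _ => zero_le_one) x
    have hind2 : 0 ≤ (thickening δ (K i) \ K i).indicator (fun _ => (1:ℝ)) x :=
      Set.indicator_nonneg (fun _ _ => zero_le_one) x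
    by_cases hxK : x ∈ K i
    · rw [hφK i x hxK, Set.indicator_of_mem (hKsub i hxK)]
      simpa using add_nonneg hind1 hind2
    · by_cases hxE : x ∈ E i
      · rw [Set.indicator_of_mem hxE,
          Set.indicator_of_mem (show x ∈ E i \ K i from ⟨hxE, hxK⟩)]
        have h01 := hφ01 i x
        rw [abs_le]
        constructor <;> [linarith [h01.2]; linarith [h01.1]]
      · rw [Set.indicator_of_notMem hxE, sub_zero]
        by_cases hφ0 : φ i x = 0
        · rw [hφ0, abs_zero]
          exact add_nonneg hind1 hind2
        · have hxT := hφsupp i x hφ0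
          rw [Set.indicator_of_mem (show x ∈ thickening δ (K i) \ K i from ⟨hxT, hxK⟩)]
          have h01 := hφ01 i x
          rw [abs_of_nonneg h01.1]
          linarith [h01.2]
  -- error estimates
  have hone_meas : ∀ s : Set X, MeasurableSet s →
      AEStronglyMeasurable (s.indicator (fun _ => (1:ℝ))) V :=
    fun s hs => ((measurable_const (a := (1:ℝ))).indicator hs).aestronglyMeasurable
  have hTmeas : ∀ i, MeasurableSet (thickening δ (K i) \ K i) :=
    fun i => (isOpen_thickening.measurableSet).diff (hKcomp i).isClosed.measurableSet
  have hEKmeas : ∀ i, MeasurableSet (E i \ K i) :=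
    fun i => (hEmeas i).diff (hKcomp i).isClosed.measurableSet
  have hindW : ∀ (s : Set X), MeasurableSet s →
      Integrable (fun x => s.indicator (fun _ => (1:ℝ)) x * W x) V ∧
      ∫ x, s.indicator (fun _ => (1:ℝ)) x * W x ∂V = (μ₀ s).toReal := by
    intro s hs
    have heq : (fun x => s.indicator (fun _ => (1:ℝ)) x * W x) = s.indicator W := by
      ext x; by_cases hx : x ∈ s <;> simp [hx]
    constructor
    · rw [heq]; exact hWint.indicator hs
    · rw [heq, integral_indicator hs, hμ₀key s hs]
  have herr : ∀ i, |(∫ x, φ i x * g i x ∂V) - ∫ x in E i, g i x ∂V| ≤ 2 * C * η := by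
    intro i
    have hφgint : Integrable (fun x => φ i x * g i x) V :=
      (hgint i).bdd_mul (c := 1) (hφcont i).aestronglyMeasurable
        (ae_of_all _ fun x => by rw [Real.norm_eq_abs, abs_of_nonneg (hφ01 i x).1]; exact (hφ01 i x).2)
    have hindint : Integrable (fun x => (E i).indicator (fun _ => (1:ℝ)) x * g i x) V :=
      (hgint i).bdd_mul (c := 1) (hone_meas _ (hEmeas i))
        (ae_of_all _ fun x => by by_cases hx : x ∈ E i <;> simp [hx])
    have hind : ∫ x in E i, g i x ∂V = ∫ x, (E i).indicator (fun _ => (1:ℝ)) x * g i x ∂V := by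
      rw [← integral_indicator (hEmeas i)]
      congr 1
      ext x
      by_cases hx : x ∈ E i <;> simp [hx]
    have hrhsint : Integrable (fun x =>
        ((E i \ K i).indicator (fun _ => (1:ℝ)) x
          + (thickening δ (K i) \ K i).indicator (fun _ => (1:ℝ)) x) * (C * W x)) V := by
      have h1 := (hindW _ (hEKmeas i)).1
      have h2 := (hindW _ (hTmeas i)).1
      have h3 : Integrable (fun x => C * ((E i \ K i).indicator (fun _ => (1:ℝ)) x * W x)
          + C * ((thickening δ (K i) \ K i).indicator (fun _ => (1:ℝ)) x * W x)) V :=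
        (h1.const_mul C).add (h2.const_mul C)
      exact h3.congr (ae_of_all _ fun x => by dsimp only; ring)
    have hptwise : ∀ x, |φ i x * g i x - (E i).indicator (fun _ => (1:ℝ)) x * g i x| ≤
        ((E i \ K i).indicator (fun _ => (1:ℝ)) x
          + (thickening δ (K i) \ K i).indicator (fun _ => (1:ℝ)) x) * (C * W x) := by
      intro x
      rw [← sub_mul, abs_mul]
      refine mul_le_mul (hφdiff i x) (hgbound i x) (abs_nonneg _)
        (add_nonneg (Set.indicator_nonneg (fun _ _ => zero_le_one) x)
          (Set.indicator_nonneg (fun _ _ => zero_le_one) x))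
    rw [hind, ← integral_sub hφgint hindint]
    have habs : |∫ x, (φ i x * g i x - (E i).indicator (fun _ => (1:ℝ)) x * g i x) ∂V|
        ≤ ∫ x, |φ i x * g i x - (E i).indicator (fun _ => (1:ℝ)) x * g i x| ∂V := by
      simpa [Real.norm_eq_abs] using norm_integral_le_integral_norm (μ := V)
        (fun x => φ i x * g i x - (E i).indicator (fun _ => (1:ℝ)) x * g i x)
    refine habs.trans ?_
    have hmono : ∫ x, |φ i x * g i x - (E i).indicator (fun _ => (1:ℝ)) x * g i x| ∂V ≤
        ∫ x, ((E i \ K i).indicator (fun _ => (1:ℝ)) x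
          + (thickening δ (K i) \ K i).indicator (fun _ => (1:ℝ)) x) * (C * W x) ∂V :=
      integral_mono (hφgint.sub hindint).abs hrhsint hptwise
    refine hmono.trans ?_
    have h1 := hindW _ (hEKmeas i)
    have h2 := hindW _ (hTmeas i)
    have hsplit2 : ∫ x, ((E i \ K i).indicator (fun _ => (1:ℝ)) x
          + (thickening δ (K i) \ K i).indicator (fun _ => (1:ℝ)) x) * (C * W x) ∂V
        = C * ((μ₀ (E i \ K i)).toReal + (μ₀ (thickening δ (K i) \ K i)).toReal) := by
      rw [show (fun x => ((E i \ K i).indicator (fun _ => (1:ℝ)) x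
            + (thickening δ (K i) \ K i).indicator (fun _ => (1:ℝ)) x) * (C * W x))
          = fun x => C * ((E i \ K i).indicator (fun _ => (1:ℝ)) x * W x)
            + C * ((thickening δ (K i) \ K i).indicator (fun _ => (1:ℝ)) x * W x)
          from funext fun x => by ring]
      rw [integral_add (h1.1.const_mul C) (h2.1.const_mul C), integral_const_mul,
        integral_const_mul, h1.2, h2.2]
      ring
    rw [hsplit2]
    have ht1 : (μ₀ (E i \ K i)).toReal ≤ η :=
      ENNReal.toReal_le_of_le_ofReal hηpos.le (hKsmall i).le
    have ht2 : (μ₀ (thickening δ (K i) \ K i)).toReal ≤ η :=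
      ENNReal.toReal_le_of_le_ofReal hηpos.le (hTdiff i).le
    nlinarith [hCpos]
  -- sum bound
  set T : ℝ := ∑ i, ∫ x, φ i x * g i x ∂V with hT
  have hsum_le : ∑ i, ∫ x in E i, g i x ∂V ≤ T + (ε:ℝ) := by
    have h1 : ∑ i, ((∫ x in E i, g i x ∂V) - ∫ x, φ i x * g i x ∂V) ≤ ∑ _i : Fin (k+1), (2 * C * η) := by
      refine Finset.sum_le_sum fun i _ => ?_
      have h := herr i
      rw [abs_sub_comm] at h
      linarith [(abs_le.mp h).2]
    have h2 : (∑ _i : Fin (k+1), (2 * C * η) : ℝ) = ((k:ℝ)+1) * (2 * C * η) := by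
      rw [Finset.sum_const, Finset.card_univ, Fintype.card_fin, nsmul_eq_mul]
      push_cast; ring
    have h3 : ((k:ℝ)+1) * (2 * C * η) ≤ (ε:ℝ) := by nlinarith [hηD, hηpos]
    have h4 : ∑ i, ((∫ x in E i, g i x ∂V) - ∫ x, φ i x * g i x ∂V)
        = (∑ i, ∫ x in E i, g i x ∂V) - T := by
      rw [hT, Finset.sum_sub_distrib]
    rw [h4, h2] at h1
    linarith
  -- identify the integrals against A with those against A'
  have hTA : ∀ i, ∫ x, φ i x * g i x ∂V = ∫ x, φ i x * ((χ i).1 ⬝ᵥ A x + (χ i).2) ∂V := by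
    intro i
    refine integral_congr_ae (hAA'.mono fun x hx => ?_)
    dsimp only
    simp only [hgdef]
    rw [hx]
  have hrwμ : ∀ (μ : Measure X) (B : X → Fin d → ℝ), IsFiniteMeasure μ → Integrable B μ →
      ∀ i, ∫ x, φ i x * ((χ i).1 ⬝ᵥ B x + (χ i).2) ∂μ
        = (dotCLM (χ i).1) (∫ x, φ i x • B x ∂μ) + (χ i).2 * ∫ x, φ i x ∂μ := by
    intro μ B hμfin hB i
    haveI := hμfin
    have hφsm : AEStronglyMeasurable (φ i) μ := (hφcont i).aestronglyMeasurable
    have hφb : ∃ C0, ∀ x, ‖φ i x‖ ≤ C0 := ⟨1, fun x => by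
      rw [Real.norm_eq_abs, abs_of_nonneg (hφ01 i x).1]; exact (hφ01 i x).2⟩
    have hdotint : Integrable (fun x => (χ i).1 ⬝ᵥ B x) μ := by
      have h := (dotCLM (χ i).1).integrable_comp hB
      simpa [dotCLM_apply] using h
    have hint1 : Integrable (fun x => φ i x • B x) μ := by
      refine hB.norm.mono' (hφsm.smul hB.1) (ae_of_all _ fun x => ?_)
      rw [norm_smul, Real.norm_eq_abs, abs_of_nonneg (hφ01 i x).1]
      exact mul_le_of_le_one_left (norm_nonneg _) (hφ01 i x).2
    have hintA : Integrable (fun x => φ i x * ((χ i).1 ⬝ᵥ B x)) μ := hdotint.bdd_mul hφsm (ae_of_all _ hφb.choose_spec)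
    have hφint : Integrable (φ i) μ := (integrable_const (1:ℝ)).mono' hφsm (ae_of_all _ fun x => by
      rw [Real.norm_eq_abs, abs_of_nonneg (hφ01 i x).1]; exact (hφ01 i x).2)
    have h2 : ∫ x, φ i x * ((χ i).1 ⬝ᵥ B x) ∂μ = (dotCLM (χ i).1) (∫ x, φ i x • B x ∂μ) := by
      rw [← ContinuousLinearMap.integral_comp_comm _ hint1]
      refine integral_congr_ae (ae_of_all _ fun x => ?_)
      dsimp only
      rw [(dotCLM (χ i).1).map_smul, dotCLM_apply, smul_eq_mul]
    have h3 : ∫ x, φ i x * (χ i).2 ∂μ = (χ i).2 * ∫ x, φ i x ∂μ := by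
      rw [integral_mul_const]; ring
    rw [← h2, ← h3, ← integral_add hintA (hφint.mul_const _)]
    refine integral_congr_ae (ae_of_all _ fun x => ?_)
    dsimp only
    ring
  -- convergence of the approximating sums
  have hTh : Tendsto (fun h => ∑ i, ∫ x, φ i x * ((χ i).1 ⬝ᵥ Ah h x + (χ i).2) ∂(Vh h))
      atTop (𝓝 T) := by
    have hTeq : T = ∑ i, ((dotCLM (χ i).1) (∫ x, φ i x • A x ∂V) + (χ i).2 * ∫ x, φ i x ∂V) := by
      rw [hT]
      exact Finset.sum_congr rfl fun i _ => by rw [hTA i, hrwμ V A hVfin hAint i]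
    rw [hTeq]
    refine tendsto_finset_sum _ fun i _ => ?_
    have h1 : Tendsto (fun h => (dotCLM (χ i).1) (∫ x, φ i x • Ah h x ∂(Vh h))) atTop
        (𝓝 ((dotCLM (χ i).1) (∫ x, φ i x • A x ∂V))) :=
      ((dotCLM (χ i).1).continuous.tendsto _).comp (hweakvec (φ i) (hφcont i))
    have h2 := (hweak (φ i) (hφcont i)).const_mul ((χ i).2)
    exact (h1.add h2).congr fun h => (hrwμ (Vh h) (Ah h) (hVhfin h) (hAhint h) i).symm
  -- per-h bound
  have hperh : ∀ h : ℕ,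
      ENNReal.ofReal (∑ i, ∫ x, φ i x * ((χ i).1 ⬝ᵥ Ah h x + (χ i).2) ∂(Vh h))
        ≤ ∫⁻ x, f (Ah h x) ∂(Vh h) := by
    intro h
    haveI := hVhfin h
    have hint : ∀ i : Fin (k+1),
        Integrable (fun x => φ i x * ((χ i).1 ⬝ᵥ Ah h x + (χ i).2)) (Vh h) := by
      intro i
      refine (lin_integrable (hAhint h) (χ i)).bdd_mul (c := 1) (hφcont i).aestronglyMeasurable
        (ae_of_all _ fun x => ?_)
      rw [Real.norm_eq_abs, abs_of_nonneg (hφ01 i x).1]; exact (hφ01 i x).2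
    rw [← integral_finset_sum _ fun i _ => hint i]
    refine (ofReal_integral_le_lintegral_ofReal'
      (integrable_finset_sum _ fun i _ => hint i)).trans ?_
    refine lintegral_mono fun x => ?_
    refine le_trans (ENNReal.ofReal_le_ofReal ?_) (hm_le (Ah h x))
    calc ∑ i, φ i x * ((χ i).1 ⬝ᵥ Ah h x + (χ i).2)
        ≤ ∑ i, φ i x * m (Ah h x) :=
          Finset.sum_le_sum fun i _ => mul_le_mul_of_nonneg_left (hm_ge i _) (hφ01 i x).1
      _ = (∑ i, φ i x) * m (Ah h x) := (Finset.sum_mul _ _ _).symm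
      _ ≤ 1 * m (Ah h x) := mul_le_mul_of_nonneg_right (hφsum x) (hm_nonneg _)
      _ = m (Ah h x) := one_mul _
  -- conclusion
  have hofT : ENNReal.ofReal T ≤ liminf (fun h => ∫⁻ x, f (Ah h x) ∂(Vh h)) atTop := by
    have h1 : Tendsto (fun h => ENNReal.ofReal
        (∑ i, ∫ x, φ i x * ((χ i).1 ⬝ᵥ Ah h x + (χ i).2) ∂(Vh h))) atTop
        (𝓝 (ENNReal.ofReal T)) :=
      (ENNReal.continuous_ofReal.tendsto _).comp hTh
    rw [← h1.liminf_eq]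
    exact liminf_le_liminf (Filter.Eventually.of_forall hperh)
  rw [hlhs2]
  calc ENNReal.ofReal (∑ i, ∫ x in E i, g i x ∂V)
      ≤ ENNReal.ofReal (T + (ε:ℝ)) := ENNReal.ofReal_le_ofReal hsum_le
    _ ≤ ENNReal.ofReal T + ENNReal.ofReal (ε:ℝ) := ENNReal.ofReal_add_le
    _ ≤ liminf (fun h => ∫⁻ x, f (Ah h x) ∂(Vh h)) atTop + ↑ε := by
        rw [ENNReal.ofReal_coe_nnreal]
        exact add_le_add hofT le_rfl

noncomputable def FnAux {d : ℕ} (e : ℕ → (Fin d → ℝ) × ℝ) : ℕ → (Fin d → ℝ) → ℝ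
  | 0 => fun _ => 0
  | n+1 => fun a => max (FnAux e n a) ((e n).1 ⬝ᵥ a + (e n).2)

/-- **Lower semicontinuity of convex curvature integrands under weak convergence of
varifolds** (the last part of Allard's compactness theorem as stated in the paper).
If finite measures Vₕ ⇀ V weakly and the vector measures Aₕ·Vₕ ⇀ A·V weakly, then for
every convex lower semicontinuous f : ℝᵈ → [0,∞],
∫ f(A) dV ≤ liminf_h ∫ f(Aₕ) dVₕ. -/
theorem lsc_convex_integrand_weak_convergence
    {X : Type*} [MetricSpace X] [CompactSpace X] [MeasurableSpace X] [BorelSpace X]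
    {d : ℕ} (hd : 1 ≤ d)
    (f : (Fin d → ℝ) → ℝ≥0∞)
    (hconv : ∀ (x y : Fin d → ℝ) (t : ℝ), 0 ≤ t → t ≤ 1 →
      f (t • x + (1 - t) • y) ≤ ENNReal.ofReal t * f x + ENNReal.ofReal (1 - t) * f y)
    (hlsc : LowerSemicontinuous f)
    (Vh : ℕ → Measure X) (V : Measure X)
    (hVhfin : ∀ h, IsFiniteMeasure (Vh h)) (hVfin : IsFiniteMeasure V)
    (Ah : ℕ → X → (Fin d → ℝ)) (A : X → (Fin d → ℝ))
    (hAhint : ∀ h, Integrable (Ah h) (Vh h)) (hAint : Integrable A V)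
    (hweak : ∀ φ : X → ℝ, Continuous φ →
      Tendsto (fun h => ∫ x, φ x ∂(Vh h)) atTop (𝓝 (∫ x, φ x ∂V)))
    (hweakvec : ∀ φ : X → ℝ, Continuous φ →
      Tendsto (fun h => ∫ x, φ x • Ah h x ∂(Vh h)) atTop (𝓝 (∫ x, φ x • A x ∂V))) :
    ∫⁻ x, f (A x) ∂V ≤ liminf (fun h => ∫⁻ x, f (Ah h x) ∂(Vh h)) atTop := by
  classical
  obtain ⟨e, he1, he2⟩ := exists_minorant_seq f hconv hlsc
  set Fn : ℕ → (Fin d → ℝ) → ℝ := FnAux e with hFn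
  have hcont : ∀ n, Continuous (Fn n) := by
    intro n
    induction n with
    | zero => exact continuous_const
    | succ n ih =>
      refine ih.max ?_
      exact Continuous.add (continuous_finset_sum _ fun j _ =>
        continuous_const.mul (continuous_apply j)) continuous_const
  have hnonneg : ∀ n a, 0 ≤ Fn n a := by
    intro n a
    induction n with
    | zero => exact le_refl 0
    | succ n ih => exact le_trans ih (le_max_left _ _)
  have hmono : ∀ n a, Fn n a ≤ Fn (n+1) a := fun n a => le_max_left _ _
  have hge : ∀ n i, i < n → ∀ a, (e i).1 ⬝ᵥ a + (e i).2 ≤ Fn n a := by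
    intro n
    induction n with
    | zero => intro i hi; omega
    | succ n ih =>
      intro i hi a
      rcases Nat.lt_succ_iff_lt_or_eq.mp hi with h | h
      · exact le_trans (ih i h a) (hmono n a)
      · subst h; exact le_max_right _ _
  have hrep : ∀ n a, Fn n a = 0 ∨ ∃ i, i < n ∧ Fn n a = (e i).1 ⬝ᵥ a + (e i).2 := by
    intro n a
    induction n with
    | zero => exact Or.inl rfl
    | succ n ih =>
      rcases le_total (Fn n a) ((e n).1 ⬝ᵥ a + (e n).2) with h | h
      · exact Or.inr ⟨n, Nat.lt_succ_self n, max_eq_right h⟩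
      · have hmax : Fn (n+1) a = Fn n a := max_eq_left h
        rcases ih with h0 | ⟨i, hi, heq⟩
        · exact Or.inl (hmax.trans h0)
        · exact Or.inr ⟨i, Nat.lt_succ_of_lt hi, hmax.trans heq⟩
  have hle : ∀ n a, ENNReal.ofReal (Fn n a) ≤ f a := by
    intro n a
    rcases hrep n a with h | ⟨i, _, h⟩
    · simp [h]
    · rw [h]; exact he1 i a
  have hsup : ∀ a, (⨆ n, ENNReal.ofReal (Fn n a)) = f a := by
    intro a
    refine le_antisymm (iSup_le fun n => hle n a) ?_
    rw [he2 a]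
    refine iSup_le fun n => ?_
    exact le_trans (ENNReal.ofReal_le_ofReal (hge (n+1) n (Nat.lt_succ_self n) a))
      (le_iSup (fun n => ENNReal.ofReal (Fn n a)) (n+1))
  -- monotone convergence
  have hlhs : ∫⁻ x, f (A x) ∂V = ⨆ n, ∫⁻ x, ENNReal.ofReal (Fn n (A x)) ∂V := by
    have h1 : ∫⁻ x, f (A x) ∂V = ∫⁻ x, ⨆ n, ENNReal.ofReal (Fn n (A x)) ∂V :=
      lintegral_congr fun x => (hsup (A x)).symm
    rw [h1]
    exact lintegral_iSup'
      (fun n => (ENNReal.measurable_ofReal.comp (hcont n).measurable).comp_aemeasurable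
        hAint.1.aemeasurable)
      (ae_of_all _ fun x => monotone_nat_of_le_succ fun n =>
        ENNReal.ofReal_le_ofReal (hmono n (A x)))
  rw [hlhs]
  refine iSup_le fun n => ?_
  -- apply the finite family estimate
  set χ : Fin (n+1) → (Fin d → ℝ) × ℝ := fun i => if (i : ℕ) < n then e i else (0, 0) with hχ
  have hχlt : ∀ i : Fin (n+1), (i : ℕ) < n → χ i = e i := fun i hi => by simp [hχ, hi]
  have hχn : ∀ i : Fin (n+1), ¬ ((i : ℕ) < n) → χ i = (0, 0) := fun i hi => by simp [hχ, hi]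
  refine finite_family_estimate f Vh V hVhfin hVfin Ah A hAhint hAint hweak hweakvec
    n χ (Fn n) (hcont n) (fun a => hnonneg n a) ?_ ?_ (fun a => hle n a)
  · intro i a
    by_cases hi : (i : ℕ) < n
    · rw [hχlt i hi]; exact hge n i hi a
    · rw [hχn i hi]; simpa using hnonneg n a
  · intro a
    rcases hrep n a with h | ⟨i, hi, heq⟩
    · refine ⟨Fin.last n, ?_⟩
      rw [hχn (Fin.last n) (by simp)]
      simpa using h
    · refine ⟨⟨i, Nat.lt_succ_of_lt hi⟩, ?_⟩
      rw [hχlt ⟨i, Nat.lt_succ_of_lt hi⟩ hi]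
      exact heq
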